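/- For every integer n ≥ 1 and real r ≥ 1, (Σ_{i=1}^{n+1} i^r + Σ_{i=1}^{n} i^r)/(n+1)^{r+1} ≥ (Σ_{i=1}^{n+2} i^r + Σ_{i=1}^{n+1} i^r)/(n+2)^{r+1}. -/

import Mathlib

open Real Set Finset

lemma core_aux (r : ℝ) (hr : 1 ≤ r) {v : ℝ} (hv : 1 ≤ v) :
    r * (v - v⁻¹) ≤ v ^ r - v ^ (-r) := by
  set g : ℝ → ℝ := fun v => v ^ r - v ^ (-r) - r * (v - v⁻¹) with hg
  have hd : ∀ v ∈ Ioi (1:ℝ), HasDerivAt g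
      (r * v ^ (r-1) + r * v ^ (-r-1) - r * (1 + (v^2)⁻¹)) v := by
    intro v hv
    have hne : v ≠ 0 := by have : (1:ℝ) < v := hv; positivity
    have h1 := Real.hasDerivAt_rpow_const (p := r) (Or.inl hne)
    have h2 := Real.hasDerivAt_rpow_const (p := -r) (Or.inl hne)
    have h3 := ((hasDerivAt_id v).sub (hasDerivAt_inv hne)).const_mul r
    refine ((h1.sub h2).sub h3).congr_deriv ?_
    ring_nf
  have hmono : MonotoneOn g (Ici 1) := by
    apply monotoneOn_of_deriv_nonneg (convex_Ici 1)
    · intro x hx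
      have hx0 : x ≠ 0 := by have : (1:ℝ) ≤ x := hx; positivity
      exact (((Real.continuousAt_rpow_const x r (Or.inl hx0)).sub
        (Real.continuousAt_rpow_const x (-r) (Or.inl hx0))).sub
        (continuousAt_const.mul (continuousAt_id.sub (continuousAt_inv₀ hx0)))).continuousWithinAt
    · rw [interior_Ici]
      intro v hv
      exact ((hd v hv).differentiableAt).differentiableWithinAt
    · rw [interior_Ici]
      intro v hv
      rw [(hd v hv).deriv]
      have hv1 : (1:ℝ) < v := hv
      have hx : 1 ≤ v ^ (r-1) := Real.one_le_rpow hv1.le (by linarith)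
      have hy0 : 0 < v ^ (-r-1) := Real.rpow_pos_of_pos (by linarith) _
      have hy1 : v ^ (-r-1) ≤ 1 := Real.rpow_le_one_of_one_le_of_nonpos hv1.le (by linarith)
      have hxy : v ^ (r-1) * v ^ (-r-1) = (v^2)⁻¹ := by
        rw [← Real.rpow_add (by linarith)]
        rw [show r - 1 + (-r - 1) = -2 by ring, Real.rpow_neg (by linarith)]
        norm_num [Real.rpow_natCast]
      nlinarith [mul_nonneg (sub_nonneg.2 hx) (sub_nonneg.2 hy1)]
  have h1 : g 1 = 0 := by simp [hg]
  have h2 := hmono self_mem_Ici hv hv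
  rw [h1] at h2
  simp only [hg] at h2
  linarith

lemma numer_nonneg (r : ℝ) (hr : 1 ≤ r) {x : ℝ} (hx : 0 < x) :
    ((x+1)^(r+1) - x^(r+1)) * (r * (x^(r-1) + (x+1)^(r-1))) ≤
      (r+1) * ((x+1)^r - x^r) * (x^r + (x+1)^r) := by
  have hB : (0:ℝ) < x + 1 := by linarith
  set a := x ^ (r-1) with ha
  set b := (x+1) ^ (r-1) with hb
  have ha0 : 0 < a := Real.rpow_pos_of_pos hx _
  have hb0 : 0 < b := Real.rpow_pos_of_pos hB _
  have hxr : x ^ r = a * x := by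
    rw [ha, Real.rpow_sub hx, Real.rpow_one]; field_simp
  have hBr : (x+1) ^ r = b * (x+1) := by
    rw [hb, Real.rpow_sub hB, Real.rpow_one]; field_simp
  have hxr1 : x ^ (r+1) = a * x * x := by
    rw [show r + 1 = r - 1 + 2 by ring, Real.rpow_add hx, ← ha,
      Real.rpow_two]; ring
  have hBr1 : (x+1) ^ (r+1) = b * (x+1) * (x+1) := by
    rw [show r + 1 = r - 1 + 2 by ring, Real.rpow_add hB, ← hb,
      Real.rpow_two]; ring
  -- transformed core: b²(x+1)² - a²x² ≥ r * a * b * ((x+1)² - x²)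
  have hv : 1 ≤ (x+1)/x := by rw [le_div_iff₀ hx]; linarith
  have hcore := core_aux r hr hv
  have hvr : ((x+1)/x) ^ r = (b*(x+1))/(a*x) := by
    rw [Real.div_rpow hB.le hx.le, hxr, hBr]
  have hvnr : ((x+1)/x) ^ (-r) = (a*x)/(b*(x+1)) := by
    rw [Real.rpow_neg (by positivity), hvr]
    rw [inv_div]
  rw [hvr, hvnr] at hcore
  have hinv : ((x+1)/x)⁻¹ = x/(x+1) := by rw [inv_div]
  rw [hinv] at hcore
  have key : r * (a*b) * ((x+1)^2 - x^2) ≤ b*(x+1)*(b*(x+1)) - a*x*(a*x) := by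
    have h := mul_le_mul_of_nonneg_right hcore (le_of_lt (by positivity : (0:ℝ) < a*x*(b*(x+1))))
    calc r * (a*b) * ((x+1)^2 - x^2)
        = r * ((x+1)/x - x/(x+1)) * (a*x*(b*(x+1))) := by field_simp
      _ ≤ (b*(x+1)/(a*x) - a*x/(b*(x+1))) * (a*x*(b*(x+1))) := h
      _ = b*(x+1)*(b*(x+1)) - a*x*(a*x) := by field_simp
  rw [hxr, hBr, hxr1, hBr1]
  nlinarith [key]

lemma f_mono (r : ℝ) (hr : 1 ≤ r) :
    MonotoneOn (fun x : ℝ => ((x+1)^(r+1) - x^(r+1)) / (x^r + (x+1)^r)) (Ici 0) := by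
  have hden : ∀ x : ℝ, 0 ≤ x → 0 < x^r + (x+1)^r := by
    intro x hx
    have h1 : (0:ℝ) < (x+1)^r := Real.rpow_pos_of_pos (by linarith) _
    have h2 : (0:ℝ) ≤ x^r := Real.rpow_nonneg hx _
    linarith
  have hd : ∀ x ∈ Ioi (0:ℝ), HasDerivAt
      (fun x : ℝ => ((x+1)^(r+1) - x^(r+1)) / (x^r + (x+1)^r))
      (((r+1) * ((x+1)^r - x^r) * (x^r + (x+1)^r) -
        ((x+1)^(r+1) - x^(r+1)) * (r * (x^(r-1) + (x+1)^(r-1)))) /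
        (x^r + (x+1)^r)^2) x := by
    intro x hx
    have hx0 : x ≠ 0 := ne_of_gt hx
    have hx1 : x + 1 ≠ 0 := by have : (0:ℝ) < x := hx; positivity
    have hB1 : HasDerivAt (fun x : ℝ => (x+1)^(r+1)) ((r+1) * (x+1)^r) x := by
      have := (Real.hasDerivAt_rpow_const (p := r+1) (Or.inl hx1)).comp x
        ((hasDerivAt_id x).add_const 1)
      simpa [Function.comp_def, add_sub_cancel_right] using this
    have hA1 : HasDerivAt (fun x : ℝ => x^(r+1)) ((r+1) * x^r) x := by
      simpa [add_sub_cancel_right] using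
        Real.hasDerivAt_rpow_const (x := x) (p := r+1) (Or.inl hx0)
    have hB2 : HasDerivAt (fun x : ℝ => (x+1)^r) (r * (x+1)^(r-1)) x := by
      have := (Real.hasDerivAt_rpow_const (p := r) (Or.inl hx1)).comp x
        ((hasDerivAt_id x).add_const 1)
      simpa [Function.comp_def] using this
    have hA2 : HasDerivAt (fun x : ℝ => x^r) (r * x^(r-1)) x :=
      Real.hasDerivAt_rpow_const (x := x) (p := r) (Or.inl hx0)
    have := (hB1.sub hA1).div (hA2.add hB2) (ne_of_gt (hden x (le_of_lt hx)))
    refine this.congr_deriv ?_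
    simp only [Pi.add_apply, Pi.sub_apply]
    ring
  apply monotoneOn_of_deriv_nonneg (convex_Ici 0)
  · intro x hx
    have hx' : (0:ℝ) ≤ x := hx
    have hx1 : x + 1 ≠ 0 := by positivity
    have c1 : ContinuousAt (fun x : ℝ => (x+1)^(r+1)) x :=
      (continuousAt_id.add continuousAt_const).rpow_const (Or.inl (by simpa using hx1))
    have c2 : ContinuousAt (fun x : ℝ => x^(r+1)) x :=
      Real.continuousAt_rpow_const x (r+1) (Or.inr (by linarith))
    have c3 : ContinuousAt (fun x : ℝ => x^r) x :=
      Real.continuousAt_rpow_const x r (Or.inr (by linarith))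
    have c4 : ContinuousAt (fun x : ℝ => (x+1)^r) x :=
      (continuousAt_id.add continuousAt_const).rpow_const (Or.inl (by simpa using hx1))
    exact (((c1.sub c2).div (c3.add c4) (ne_of_gt (hden x hx')))).continuousWithinAt
  · rw [interior_Ici]
    intro x hx
    exact ((hd x hx).differentiableAt).differentiableWithinAt
  · rw [interior_Ici]
    intro x hx
    rw [(hd x hx).deriv]
    apply div_nonneg _ (by positivity)
    have := numer_nonneg r hr hx
    linarith

lemma key_sum (r : ℝ) (hr : 1 ≤ r) (m : ℕ) :
    (m:ℝ)^(r+1) * ((m:ℝ)^r + ((m:ℝ)+1)^r) ≤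
      (((m:ℝ)+1)^(r+1) - (m:ℝ)^(r+1)) * ∑ j ∈ range m, ((j:ℝ)^r + ((j:ℝ)+1)^r) := by
  have hden : ∀ x : ℝ, 0 ≤ x → 0 < x^r + (x+1)^r := by
    intro x hx
    have h1 : (0:ℝ) < (x+1)^r := Real.rpow_pos_of_pos (by linarith) _
    have h2 : (0:ℝ) ≤ x^r := Real.rpow_nonneg hx _
    linarith
  have hpt : ∀ j ∈ range m,
      (((j:ℝ)+1)^(r+1) - (j:ℝ)^(r+1)) * ((m:ℝ)^r + ((m:ℝ)+1)^r) ≤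
      (((m:ℝ)+1)^(r+1) - (m:ℝ)^(r+1)) * ((j:ℝ)^r + ((j:ℝ)+1)^r) := by
    intro j hj
    have hjm : (j:ℝ) ≤ (m:ℝ) := by
      have := Finset.mem_range.mp hj; exact_mod_cast this.le
    have h := f_mono r hr (mem_Ici.2 (by positivity : (0:ℝ) ≤ (j:ℝ)))
      (mem_Ici.2 (by positivity : (0:ℝ) ≤ (m:ℝ))) hjm
    rw [div_le_div_iff₀ (hden _ (by positivity)) (hden _ (by positivity))] at h
    linarith
  have hsum := Finset.sum_le_sum hpt
  rw [← Finset.sum_mul, ← Finset.mul_sum] at hsum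
  have htel : ∑ j ∈ range m, (((j:ℝ)+1)^(r+1) - (j:ℝ)^(r+1)) = (m:ℝ)^(r+1) := by
    have := Finset.sum_range_sub (fun j : ℕ => ((j:ℝ))^(r+1)) m
    simp only [Nat.cast_add, Nat.cast_one] at this
    rw [this]
    simp [Real.zero_rpow (by linarith : r + 1 ≠ 0)]
  rw [htel] at hsum
  exact hsum

lemma icc_range (k : ℕ) (f : ℕ → ℝ) : ∑ i ∈ Icc 1 k, f i = ∑ j ∈ range k, f (j+1) := by
  induction k with
  | zero => simp
  | succ k ih => rw [Finset.sum_Icc_succ_top (by omega), ih, Finset.sum_range_succ]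

theorem stmt_11 (n : ℕ) (hn : 1 ≤ n) (r : ℝ) (hr : 1 ≤ r) :
    ((∑ i ∈ Finset.Icc 1 (n + 2), (i : ℝ) ^ r) + ∑ i ∈ Finset.Icc 1 (n + 1), (i : ℝ) ^ r) /
        (n + 2 : ℝ) ^ (r + 1) ≤
    ((∑ i ∈ Finset.Icc 1 (n + 1), (i : ℝ) ^ r) + ∑ i ∈ Finset.Icc 1 n, (i : ℝ) ^ r) /
        (n + 1 : ℝ) ^ (r + 1) := by
  have h2 : (0:ℝ) < (n + 2 : ℝ) ^ (r+1) := Real.rpow_pos_of_pos (by positivity) _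
  have h1 : (0:ℝ) < (n + 1 : ℝ) ^ (r+1) := Real.rpow_pos_of_pos (by positivity) _
  rw [div_le_div_iff₀ h2 h1]
  have key := key_sum r hr (n+1)
  have hsplit : ∑ j ∈ range (n+1), (((j:ℕ):ℝ)^r + (((j:ℕ):ℝ)+1)^r) =
      (∑ i ∈ Icc 1 n, (i:ℝ)^r) + ∑ i ∈ Icc 1 (n+1), (i:ℝ)^r := by
    rw [Finset.sum_add_distrib]
    congr 1
    · rw [Finset.sum_range_succ', icc_range]
      push_cast
      simp [Real.zero_rpow (by linarith : r ≠ 0)]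
    · rw [icc_range]
      push_cast
      rfl
  rw [hsplit] at key
  push_cast at key
  have e2 : ∑ i ∈ Icc 1 (n+2), (i:ℝ)^r =
      (∑ i ∈ Icc 1 (n+1), (i:ℝ)^r) + ((n:ℝ)+2)^r := by
    rw [Finset.sum_Icc_succ_top (by omega)]
    push_cast; ring
  have e1 : ∑ i ∈ Icc 1 (n+1), (i:ℝ)^r =
      (∑ i ∈ Icc 1 n, (i:ℝ)^r) + ((n:ℝ)+1)^r := by
    rw [Finset.sum_Icc_succ_top (by omega)]
    push_cast; ring
  have hc : ((n:ℝ) + 1 + 1) = (n:ℝ) + 2 := by ring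
  rw [hc] at key
  rw [e2, e1]
  rw [e1] at key
  nlinarith [key]
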